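/- arXiv:2304.09501 — 3 statements merged into one kernel-verified Lean document; each statement's English description precedes it below -/
import Mathlib

section
/- Let V be a finite-dimensional real normed vector space and B : V → V → ℝ a symmetric bilinear form. Let η_j, ξ_j : Fin 3 → V (j ∈ ℕ) be sequences of triples such that for every j: (i) B(η_{j,α}, η_{j,β}) = δ_{αβ} for all α, β; (ii) the linear span of {η_{j,1}, η_{j,2}, η_{j,3}} equals the linear span of {ξ_{j,1}, ξ_{j,2}, ξ_{j,3}}. Suppose that ξ_j converges componentwise to a triple ξ_∞ : Fin 3 → V which is linearly independent, and that B is positive definite on the span of {ξ_{∞,1}, ξ_{∞,2}, ξ_{∞,3}}. Then there exists M such that ‖η_{j,α}‖ ≤ M for all j and all α. -/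
open Filter

private lemma aux_finite_bound (g : ℕ → Fin 3 → ℝ) (N : ℕ) :
    ∃ M : ℝ, ∀ j < N, ∀ α, g j α ≤ M := by
  induction N with
  | zero => exact ⟨0, fun j hj => absurd hj (Nat.not_lt_zero j)⟩
  | succ n ih =>
    obtain ⟨M, hM⟩ := ih
    obtain ⟨M', hM'⟩ := Finite.exists_le (g n)
    refine ⟨max M M', fun j hj α => ?_⟩
    rcases Nat.lt_succ_iff_lt_or_eq.mp hj with h | rfl
    · exact le_trans (hM j h α) (le_max_left _ _)
    · exact le_trans (hM' α) (le_max_right _ _)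

set_option maxHeartbeats 1000000 in
/-- If `η_j` are `B`-orthonormal triples whose spans agree with those of triples `ξ_j`
converging to a linearly independent triple `ξ_∞` spanning a `B`-positive definite subspace,
then the `η_j` are uniformly bounded in norm. -/
theorem stmt2 (V : Type*) [NormedAddCommGroup V] [NormedSpace ℝ V] [FiniteDimensional ℝ V]
    (B : V →ₗ[ℝ] V →ₗ[ℝ] ℝ) (hsymm : ∀ x y, B x y = B y x)
    (η ξ : ℕ → Fin 3 → V) (ξ' : Fin 3 → V)
    (horth : ∀ j α β, B (η j α) (η j β) = if α = β then (1 : ℝ) else 0)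
    (hspan : ∀ j, Submodule.span ℝ (Set.range (η j)) = Submodule.span ℝ (Set.range (ξ j)))
    (hconv : ∀ α, Tendsto (fun j => ξ j α) atTop (nhds (ξ' α)))
    (hli : LinearIndependent ℝ ξ')
    (hpos : ∀ v ∈ Submodule.span ℝ (Set.range ξ'), v ≠ 0 → 0 < B v v) :
    ∃ M : ℝ, ∀ j α, ‖η j α‖ ≤ M := by
  classical
  -- continuity bound for B
  obtain ⟨C, hC0, hCb⟩ : ∃ C : ℝ, 0 ≤ C ∧ ∀ x y : V, |B x y| ≤ C * ‖x‖ * ‖y‖ := by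
    let Bc : V →L[ℝ] V →L[ℝ] ℝ := LinearMap.toContinuousLinearMap
      ((LinearMap.toContinuousLinearMap.toLinearMap).comp B)
    refine ⟨‖Bc‖, norm_nonneg Bc, fun x y => ?_⟩
    calc |B x y| = ‖Bc x y‖ := rfl
    _ ≤ ‖Bc x‖ * ‖y‖ := (Bc x).le_opNorm y
    _ ≤ ‖Bc‖ * ‖x‖ * ‖y‖ := by gcongr; exact Bc.le_opNorm x
  have hBcont : Continuous fun p : V × V => B p.1 p.2 := by
    let Bc : V →L[ℝ] V →L[ℝ] ℝ := LinearMap.toContinuousLinearMap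
      ((LinearMap.toContinuousLinearMap.toLinearMap).comp B)
    exact Bc.continuous₂
  -- the limit combination map and quadratic form
  set f : (Fin 3 → ℝ) → V := fun c => ∑ β, c β • ξ' β with hf
  have hf_cont : Continuous f := by
    apply continuous_finset_sum
    intro β _
    exact (continuous_apply β).smul continuous_const
  have hf_mem : ∀ c, f c ∈ Submodule.span ℝ (Set.range ξ') := by
    intro c
    exact Submodule.sum_mem _ fun β _ =>
      Submodule.smul_mem _ _ (Submodule.subset_span ⟨β, rfl⟩)
  have hf_ne : ∀ c : Fin 3 → ℝ, c ≠ 0 → f c ≠ 0 := by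
    intro c hc h0
    exact hc (funext fun β => Fintype.linearIndependent_iff.mp hli c h0 β)
  set q : (Fin 3 → ℝ) → ℝ := fun c => B (f c) (f c) with hq
  have hq_cont : Continuous q := hBcont.comp (hf_cont.prodMk hf_cont)
  -- minimum on the sphere
  obtain ⟨c₀, hc₀S, hc₀min⟩ := (isCompact_sphere (0 : Fin 3 → ℝ) 1).exists_isMinOn
    (NormedSpace.sphere_nonempty.mpr zero_le_one) hq_cont.continuousOn
  set m : ℝ := q c₀ with hm
  have hc₀ne : c₀ ≠ 0 := by
    intro h
    have := mem_sphere_zero_iff_norm.mp hc₀S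
    rw [h, norm_zero] at this; exact one_ne_zero this.symm
  have hm0 : 0 < m := hpos _ (hf_mem c₀) (hf_ne c₀ hc₀ne)
  -- scaling: q c ≥ m * ‖c‖²
  have hf_smul : ∀ (t : ℝ) (c : Fin 3 → ℝ), f (t • c) = t • f c := by
    intro t c
    simp only [hf, Pi.smul_apply, smul_smul, Finset.smul_sum, smul_eq_mul]
  have hq_lb : ∀ c : Fin 3 → ℝ, m * ‖c‖ ^ 2 ≤ q c := by
    intro c
    rcases eq_or_ne c 0 with rfl | hc
    · simp [hq, hf]
    · have hcn : (0 : ℝ) < ‖c‖ := norm_pos_iff.mpr hc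
      set u : Fin 3 → ℝ := ‖c‖⁻¹ • c with hu
      have hus : u ∈ Metric.sphere (0 : Fin 3 → ℝ) 1 := by
        rw [mem_sphere_zero_iff_norm, hu, norm_smul, norm_inv, norm_norm,
          inv_mul_cancel₀ hcn.ne']
      have hcu : c = ‖c‖ • u := by
        rw [hu, smul_smul, mul_inv_cancel₀ hcn.ne', one_smul]
      have key : q c = ‖c‖ ^ 2 * q u := by
        conv_lhs => rw [hcu]
        show B (f (‖c‖ • u)) (f (‖c‖ • u)) = ‖c‖ ^ 2 * B (f u) (f u)
        simp only [hf_smul, map_smul, LinearMap.smul_apply, smul_eq_mul]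
        ring
      have hqu : m ≤ q u := hc₀min hus
      rw [key]
      nlinarith [sq_nonneg ‖c‖]
  -- norms
  set R : ℝ := ∑ β, ‖ξ' β‖ with hR
  have hR0 : 0 ≤ R := Finset.sum_nonneg fun _ _ => norm_nonneg _
  have hfv : ∀ c : Fin 3 → ℝ, ‖f c‖ ≤ R * ‖c‖ := by
    intro c
    calc ‖f c‖ ≤ ∑ β, ‖c β • ξ' β‖ := norm_sum_le _ _
    _ ≤ ∑ β, ‖c‖ * ‖ξ' β‖ := by
        apply Finset.sum_le_sum
        intro β _
        rw [norm_smul]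
        exact mul_le_mul_of_nonneg_right (norm_le_pi_norm c β) (norm_nonneg _)
    _ = R * ‖c‖ := by rw [← Finset.mul_sum, ← hR, mul_comm]
  -- the error sequence
  set ε : ℕ → ℝ := fun j => ∑ β, ‖ξ j β - ξ' β‖ with hε
  have hε0 : ∀ j, 0 ≤ ε j := fun j => Finset.sum_nonneg fun _ _ => norm_nonneg _
  have hεt : Tendsto ε atTop (nhds 0) := by
    have : Tendsto (fun j => ∑ β : Fin 3, ‖ξ j β - ξ' β‖) atTop (nhds (∑ β : Fin 3, (0:ℝ))) := by
      apply tendsto_finset_sum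
      intro β _
      have h1 : Tendsto (fun j => ξ j β - ξ' β) atTop (nhds 0) := by
        have := (hconv β).sub (tendsto_const_nhds (x := ξ' β))
        rwa [sub_self] at this
      simpa using h1.norm
    simpa using this
  set δ : ℝ := min 1 (m / (2 * (2 * C * R + C) + 1)) with hδ
  have hδ0 : 0 < δ := by
    apply lt_min one_pos
    apply div_pos hm0
    nlinarith
  have hδ1 : δ ≤ 1 := min_le_left _ _
  have hδ2 : (2 * C * R + C) * δ ≤ m / 2 := by
    have h1 : δ ≤ m / (2 * (2 * C * R + C) + 1) := min_le_right _ _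
    have h2 : 0 < 2 * (2 * C * R + C) + 1 := by nlinarith
    have h3 : 0 ≤ 2 * C * R + C := by nlinarith
    have h6 : δ * (2 * (2 * C * R + C) + 1) ≤ m := (le_div_iff₀ h2).mp h1
    nlinarith [hδ0.le]
  obtain ⟨N, hN⟩ := (hεt.eventually (eventually_lt_nhds hδ0)).exists_forall_of_atTop
  obtain ⟨M₁, hM₁⟩ := aux_finite_bound (fun j α => ‖η j α‖) N
  set M₀ : ℝ := (R + 1) * Real.sqrt (2 / m) with hM₀
  refine ⟨max M₀ M₁, fun j α => ?_⟩
  rcases lt_or_ge j N with hj | hj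
  · exact le_trans (hM₁ j hj α) (le_max_right _ _)
  · refine le_trans ?_ (le_max_left _ _)
    have hεj : ε j < δ := hN j hj
    have hw : η j α ∈ Submodule.span ℝ (Set.range (ξ j)) := by
      rw [← hspan j]; exact Submodule.subset_span ⟨α, rfl⟩
    rw [Submodule.mem_span_range_iff_exists_fun] at hw
    obtain ⟨c, hc⟩ := hw
    set v : V := f c with hv
    set e : V := η j α - v with he
    have hsplit : η j α = v + e := by rw [he]; abel
    have hee : e = ∑ β, c β • (ξ j β - ξ' β) := by
      rw [he, ← hc, hv]
      show _ - (∑ β, c β • ξ' β) = _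
      rw [← Finset.sum_sub_distrib]
      congr 1; funext β; rw [smul_sub]
    have hen : ‖e‖ ≤ ε j * ‖c‖ := by
      rw [hee]
      calc ‖∑ β, c β • (ξ j β - ξ' β)‖ ≤ ∑ β, ‖c β • (ξ j β - ξ' β)‖ := norm_sum_le _ _
      _ ≤ ∑ β, ‖ξ j β - ξ' β‖ * ‖c‖ := by
          apply Finset.sum_le_sum
          intro β _
          rw [norm_smul, mul_comm]
          exact mul_le_mul_of_nonneg_left (norm_le_pi_norm c β) (norm_nonneg _)
      _ = ε j * ‖c‖ := by rw [← Finset.sum_mul]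
    have hone : B (η j α) (η j α) = 1 := by rw [horth j α α]; simp
    have hexp : B v v = 1 - B v e - B e v - B e e := by
      have hx : B (η j α) (η j α) = B v v + B v e + B e v + B e e := by
        rw [hsplit]
        simp only [map_add, LinearMap.add_apply]
        ring
      rw [hone] at hx; linarith
    have hvb : ‖v‖ ≤ R * ‖c‖ := hfv c
    have hcb2 : m * ‖c‖ ^ 2 ≤ B v v := hq_lb c
    have h1 : |B v e| ≤ C * (R * ‖c‖) * (ε j * ‖c‖) := by
      refine le_trans (hCb v e) ?_
      gcongr <;> positivity
    have h2 : |B e v| ≤ C * (ε j * ‖c‖) * (R * ‖c‖) := by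
      refine le_trans (hCb e v) ?_
      gcongr <;> positivity
    have h3 : |B e e| ≤ C * (ε j * ‖c‖) * (ε j * ‖c‖) := by
      refine le_trans (hCb e e) ?_
      gcongr <;> positivity
    have e1 : B v v ≤ 1 + |B v e| + |B e v| + |B e e| := by
      rw [hexp]
      linarith [neg_abs_le (B v e), neg_abs_le (B e v), neg_abs_le (B e e)]
    have hεle : ε j ≤ 1 := le_trans hεj.le hδ1
    have e2 : |B v e| + |B e v| + |B e e| ≤ (2 * C * R + C) * ε j * ‖c‖ ^ 2 := by
      have hint : 0 ≤ C * ε j * ‖c‖ ^ 2 * (1 - ε j) :=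
        mul_nonneg (mul_nonneg (mul_nonneg hC0 (hε0 j)) (sq_nonneg ‖c‖))
          (sub_nonneg.mpr hεle)
      nlinarith [h1, h2, h3]
    have e3 : (2 * C * R + C) * ε j * ‖c‖ ^ 2 ≤ m / 2 * ‖c‖ ^ 2 := by
      have h4 : (2 * C * R + C) * ε j ≤ m / 2 :=
        le_trans (mul_le_mul_of_nonneg_left hεj.le (by nlinarith)) hδ2
      exact mul_le_mul_of_nonneg_right h4 (sq_nonneg _)
    have hc2 : ‖c‖ ^ 2 ≤ 2 / m := by
      have h5 : m / 2 * ‖c‖ ^ 2 ≤ 1 := by linarith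
      rw [le_div_iff₀ hm0]
      nlinarith
    have hcn : ‖c‖ ≤ Real.sqrt (2 / m) := by
      calc ‖c‖ = Real.sqrt (‖c‖ ^ 2) := (Real.sqrt_sq (norm_nonneg c)).symm
      _ ≤ Real.sqrt (2 / m) := Real.sqrt_le_sqrt hc2
    calc ‖η j α‖ = ‖v + e‖ := by rw [hsplit]
    _ ≤ ‖v‖ + ‖e‖ := norm_add_le _ _
    _ ≤ R * ‖c‖ + ε j * ‖c‖ := add_le_add hvb hen
    _ ≤ (R + 1) * ‖c‖ := by nlinarith [hεj.le, hδ1, norm_nonneg c]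
    _ ≤ (R + 1) * Real.sqrt (2 / m) := by
        exact mul_le_mul_of_nonneg_left hcn (by linarith)
    _ = M₀ := hM₀.symm
end

section
/- Let V be a finite-dimensional real normed vector space and B : V → V → ℝ a symmetric bilinear form. Let η_j : Fin 3 → V be a sequence of triples with B(η_{j,α}, η_{j,β}) = δ_{αβ} for all j, α, β, and suppose max_α ‖η_{j,α}‖ → ∞ as j → ∞. Then there exists a sequence of vectors u_j ∈ V with ‖u_j‖ = 1, each u_j lying in the linear span of {η_{j,1}, η_{j,2}, η_{j,3}}, such that B(u_j, u_j) → 0 as j → ∞. -/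
open Filter

/-- If `η_j` are `B`-orthonormal triples with `max_α ‖η_{j,α}‖ → ∞`, then there are unit
vectors `u_j` in the span of `η_j` with `B(u_j, u_j) → 0`. -/
theorem stmt3 (V : Type*) [NormedAddCommGroup V] [NormedSpace ℝ V] [FiniteDimensional ℝ V]
    (B : V →ₗ[ℝ] V →ₗ[ℝ] ℝ) (hsymm : ∀ x y, B x y = B y x)
    (η : ℕ → Fin 3 → V)
    (horth : ∀ j α β, B (η j α) (η j β) = if α = β then (1 : ℝ) else 0)
    (hdiv : Tendsto (fun j => ⨆ α : Fin 3, ‖η j α‖) atTop atTop) :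
    ∃ u : ℕ → V, (∀ j, ‖u j‖ = 1 ∧ u j ∈ Submodule.span ℝ (Set.range (η j))) ∧
      Tendsto (fun j => B (u j) (u j)) atTop (nhds 0) := by
  choose α hα using fun j => Finite.exists_max (fun a : Fin 3 => ‖η j a‖)
  have hne : ∀ j, η j (α j) ≠ 0 := by
    intro j h
    have := horth j (α j) (α j)
    simp [h] at this
  have hnorm : ∀ j, ‖η j (α j)‖ ≠ 0 := fun j => norm_ne_zero_iff.mpr (hne j)
  refine ⟨fun j => ‖η j (α j)‖⁻¹ • η j (α j), fun j => ⟨?_, ?_⟩, ?_⟩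
  · rw [norm_smul, norm_inv, norm_norm, inv_mul_cancel₀ (hnorm j)]
  · exact Submodule.smul_mem _ _ (Submodule.subset_span ⟨α j, rfl⟩)
  · have hB : ∀ j, B (‖η j (α j)‖⁻¹ • η j (α j)) (‖η j (α j)‖⁻¹ • η j (α j))
        = (‖η j (α j)‖⁻¹) ^ 2 := by
      intro j
      simp [map_smul, horth j (α j) (α j), sq]
    have hdiv' : Tendsto (fun j => ‖η j (α j)‖) atTop atTop := by
      refine tendsto_atTop_mono (fun j => ?_) hdiv
      exact ciSup_le (hα j)
    have : Tendsto (fun j => (‖η j (α j)‖⁻¹) ^ 2) atTop (nhds 0) := by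
      have h0 : Tendsto (fun j => (‖η j (α j)‖)⁻¹) atTop (nhds 0) :=
        tendsto_inv_atTop_zero.comp hdiv'
      simpa using (h0.pow 2)
    exact this.congr (fun j => (hB j).symm)
end

section
/- Let V be a finite-dimensional real normed vector space and B : V → V → ℝ a symmetric bilinear form. Assume V admits a direct sum decomposition V = P⁺ ⊕ P⁻ into B-orthogonal subspaces with dim P⁺ = 3, B positive definite on P⁺ and negative definite on P⁻. Let Λ ⊆ V be the ℤ-span of some ℝ-basis of V. Let η_∞ : Fin 3 → V be a triple with B(η_{∞,α}, η_{∞,β}) = δ_{αβ}, and let P be the span of {η_{∞,1}, η_{∞,2}, η_{∞,3}}; assume there is no δ ∈ Λ with B(δ,δ) = -2 and B(δ,x) = 0 for all x ∈ P. Suppose η_j : Fin 3 → V converges componentwise to η_∞, and C_j ∈ Λ is a sequence with C_j ≠ 0, B(C_j, C_j) ∈ {0, -2}, and B(C_j, η_{j,α}) → 0 as j → ∞ for each α. Then a contradiction follows (i.e., no such data can exist). -/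
open Filter

theorem aux_key (V : Type*) [NormedAddCommGroup V] [NormedSpace ℝ V] [FiniteDimensional ℝ V]
    (B : V →ₗ[ℝ] V →ₗ[ℝ] ℝ) (hsymm : ∀ x y, B x y = B y x)
    (Pp Pm : Submodule ℝ V) (hcompl : IsCompl Pp Pm)
    (hdimPp : Module.finrank ℝ Pp = 3)
    (hneg : ∀ y ∈ Pm, y ≠ 0 → B y y < 0)
    (η' : Fin 3 → V)
    (horthη : ∀ α β, B (η' α) (η' β) = if α = β then (1 : ℝ) else 0)
    (w : V) (hworth : ∀ α, B w (η' α) = 0) (hwsq : 0 ≤ B w w) : w = 0 := by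
  by_contra hw
  have hworth' : ∀ α, B (η' α) w = 0 := fun α => (hsymm (η' α) w).trans (hworth α)
  set f : Fin 4 → V := ![η' 0, η' 1, η' 2, w] with hf
  have hli : LinearIndependent ℝ (fun i => Pm.mkQ (f i)) := by
    rw [Fintype.linearIndependent_iff]
    intro g hg
    have hu : (∑ i, g i • f i) ∈ Pm := by
      rw [← Submodule.Quotient.mk_eq_zero, ← Submodule.mkQ_apply, map_sum]
      simpa [map_smul] using hg
    set u := ∑ i, g i • f i with hudef
    have hexp : u = g 0 • η' 0 + g 1 • η' 1 + g 2 • η' 2 + g 3 • w := by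
      simp [hudef, Fin.sum_univ_four, hf]
    have hBuu : B u u = g 0 ^ 2 + g 1 ^ 2 + g 2 ^ 2 + g 3 ^ 2 * B w w := by
      simp only [hexp, map_add, map_smul, LinearMap.add_apply, LinearMap.smul_apply,
        smul_eq_mul, horthη, hworth, hworth']
      norm_num [Fin.ext_iff]
      ring
    have huz : u = 0 := by
      by_contra hune
      have hlt := hneg u hu hune
      nlinarith [sq_nonneg (g 0), sq_nonneg (g 1), sq_nonneg (g 2),
        mul_nonneg (sq_nonneg (g 3)) hwsq]
    have hz : g 0 • η' 0 + g 1 • η' 1 + g 2 • η' 2 + g 3 • w = 0 := hexp ▸ huz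
    have e0 : g 0 = 0 := by
      have h := congrArg (fun x => B x (η' 0)) hz
      simpa [map_add, map_smul, horthη, hworth] using h
    have e1 : g 1 = 0 := by
      have h := congrArg (fun x => B x (η' 1)) hz
      simpa [map_add, map_smul, horthη, hworth] using h
    have e2 : g 2 = 0 := by
      have h := congrArg (fun x => B x (η' 2)) hz
      simpa [map_add, map_smul, horthη, hworth] using h
    have e3 : g 3 = 0 := by
      rw [e0, e1, e2] at hz
      simp only [zero_smul, zero_add] at hz
      rcases smul_eq_zero.mp hz with h | h
      · exact h
      · exact absurd h hw
    intro i
    fin_cases i <;> assumption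
  have hcard := hli.fintype_card_le_finrank
  simp only [Fintype.card_fin] at hcard
  have h1 := Submodule.finrank_quotient_add_finrank Pm
  have h2 := Submodule.finrank_add_eq_of_isCompl hcompl
  omega

theorem aux_coercive (V : Type*) [NormedAddCommGroup V] [NormedSpace ℝ V] [FiniteDimensional ℝ V]
    (B : V →ₗ[ℝ] V →ₗ[ℝ] ℝ) (hsymm : ∀ x y, B x y = B y x)
    (η' : Fin 3 → V)
    (horthη : ∀ α β, B (η' α) (η' β) = if α = β then (1 : ℝ) else 0)
    (key : ∀ w, (∀ α, B w (η' α) = 0) → 0 ≤ B w w → w = 0) :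
    ∃ c > 0, ∀ v : V, c * ‖v‖ ^ 2 ≤
      2 * ((B v (η' 0)) ^ 2 + (B v (η' 1)) ^ 2 + (B v (η' 2)) ^ 2) - B v v := by
  set g : V → ℝ := fun v =>
    2 * ((B v (η' 0)) ^ 2 + (B v (η' 1)) ^ 2 + (B v (η' 2)) ^ 2) - B v v with hgdef
  have gpos : ∀ v : V, v ≠ 0 → 0 < g v := by
    intro v hv
    by_contra hle
    push_neg at hle
    set p : V := (B v (η' 0)) • η' 0 + (B v (η' 1)) • η' 1 + (B v (η' 2)) • η' 2 with hp
    set w := v - p with hwdef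
    have hworth : ∀ α, B w (η' α) = 0 := by
      intro α
      fin_cases α <;>
        simp [hwdef, hp, map_sub, map_add, map_smul, horthη, Fin.ext_iff]
    have hsymm' : ∀ α, B (η' α) w = 0 := fun α => (hsymm (η' α) w).trans (hworth α)
    have hvpw : v = p + w := by simp [hwdef]
    have hpp : B p p = (B v (η' 0)) ^ 2 + (B v (η' 1)) ^ 2 + (B v (η' 2)) ^ 2 := by
      simp only [hp, map_add, map_smul, LinearMap.add_apply, LinearMap.smul_apply,
        smul_eq_mul, horthη]
      norm_num [Fin.ext_iff]
      ring
    have hpw : B p w = 0 := by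
      simp [hp, map_add, map_smul, hsymm' ]
    have hwp : B w p = (0:ℝ) := (hsymm w p).trans hpw
    have hvv : B v v = B p p + B w w := by
      conv_lhs => rw [hvpw]
      simp [map_add, hpw, hwp]
    have hS : 0 ≤ (B v (η' 0)) ^ 2 + (B v (η' 1)) ^ 2 + (B v (η' 2)) ^ 2 := by positivity
    have hle' : 2 * ((B v (η' 0)) ^ 2 + (B v (η' 1)) ^ 2 + (B v (η' 2)) ^ 2) - B v v ≤ 0 := hle
    have hww : 0 ≤ B w w := by linarith
    have hwz : w = 0 := key w hworth hww
    have hBw : B w w = 0 := by rw [hwz]; simp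
    have ht : (B v (η' 0)) ^ 2 + (B v (η' 1)) ^ 2 + (B v (η' 2)) ^ 2 ≤ 0 := by
      linarith
    have h0 : B v (η' 0) = 0 := by
      have hq : (B v (η' 0)) ^ 2 ≤ 0 := by
        linarith [sq_nonneg (B v (η' 1)), sq_nonneg (B v (η' 2))]
      exact pow_eq_zero_iff two_ne_zero |>.mp (le_antisymm hq (sq_nonneg _))
    have h1 : B v (η' 1) = 0 := by
      have hq : (B v (η' 1)) ^ 2 ≤ 0 := by
        linarith [sq_nonneg (B v (η' 0)), sq_nonneg (B v (η' 2))]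
      exact pow_eq_zero_iff two_ne_zero |>.mp (le_antisymm hq (sq_nonneg _))
    have h2 : B v (η' 2) = 0 := by
      have hq : (B v (η' 2)) ^ 2 ≤ 0 := by
        linarith [sq_nonneg (B v (η' 0)), sq_nonneg (B v (η' 1))]
      exact pow_eq_zero_iff two_ne_zero |>.mp (le_antisymm hq (sq_nonneg _))
    apply hv
    rw [hvpw, hwz, hp, h0, h1, h2]
    simp
  have hvne : ∃ v : V, v ≠ 0 := by
    refine ⟨η' 0, fun h => ?_⟩
    have := horthη 0 0
    rw [h] at this
    simp at this
  haveI : Nontrivial V := by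
    obtain ⟨v, hv⟩ := hvne
    exact nontrivial_of_ne v 0 hv
  have hcont : Continuous g := by
    have h1 : ∀ α : Fin 3, Continuous fun v : V => B v (η' α) := fun α =>
      (LinearMap.continuous_of_finiteDimensional (B.flip (η' α)))
    have h2 : Continuous fun v : V => B v v := by
      let B1 : V →ₗ[ℝ] V →L[ℝ] ℝ :=
        { toFun := fun v => LinearMap.toContinuousLinearMap (B v)
          map_add' := by intro x y; ext z; simp
          map_smul' := by intro c x; ext z; simp }
      let B2 : V →L[ℝ] V →L[ℝ] ℝ := LinearMap.toContinuousLinearMap B1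
      have hB2 : ∀ x y : V, B2 x y = B x y := fun x y => rfl
      have := B2.continuous₂
      have h3 : Continuous fun v : V => B2 v v :=
        this.comp (continuous_id.prodMk continuous_id)
      simpa [hB2] using h3
    exact (continuous_const.mul ((((h1 0).pow 2).add ((h1 1).pow 2)).add ((h1 2).pow 2))).sub h2
  have hcompact : IsCompact (Metric.sphere (0:V) 1) := isCompact_sphere 0 1
  have hne : (Metric.sphere (0:V) 1).Nonempty := NormedSpace.sphere_nonempty.mpr zero_le_one
  obtain ⟨v₀, hv₀, hmin⟩ := hcompact.exists_isMinOn hne hcont.continuousOn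
  have hv₀ne : v₀ ≠ 0 := by
    intro h
    rw [h] at hv₀
    simp at hv₀
  refine ⟨g v₀, gpos v₀ hv₀ne, fun v => ?_⟩
  rcases eq_or_ne v 0 with rfl | hv
  · simp [hgdef]
  · have hn : 0 < ‖v‖ := norm_pos_iff.mpr hv
    have hu : ‖v‖⁻¹ • v ∈ Metric.sphere (0:V) 1 := by
      simp [norm_smul, abs_of_nonneg, hn.ne']
    have h := isMinOn_iff.mp hmin _ hu
    have hg : g (‖v‖⁻¹ • v) = ‖v‖⁻¹ ^ 2 * g v := by
      simp only [hgdef, map_smul, LinearMap.smul_apply, smul_eq_mul]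
      ring
    rw [hg] at h
    have h2 := mul_le_mul_of_nonneg_left h (by positivity : (0:ℝ) ≤ ‖v‖ ^ 2)
    calc g v₀ * ‖v‖ ^ 2 = ‖v‖ ^ 2 * g v₀ := by ring
      _ ≤ ‖v‖ ^ 2 * (‖v‖⁻¹ ^ 2 * g v) := h2
      _ = g v := by field_simp

set_option maxHeartbeats 1000000 in
theorem aux_arith (c M n ε t0 t1 t2 q : ℝ) (hc : 0 < c) (hM : 0 ≤ M) (hn : 0 ≤ n)
    (hε : ε = Real.sqrt (c / (24 * (M + 1) ^ 2)))
    (h0 : |t0| ≤ 1 + M * n * ε) (h1 : |t1| ≤ 1 + M * n * ε) (h2 : |t2| ≤ 1 + M * n * ε)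
    (hq : q = 0 ∨ q = -2)
    (hcn : c * n ^ 2 ≤ 2 * (t0 ^ 2 + t1 ^ 2 + t2 ^ 2) - q) :
    n ^ 2 ≤ 28 / c := by
  have hden : (0:ℝ) < 24 * (M + 1) ^ 2 := by positivity
  have hε2 : ε ^ 2 * (24 * (M + 1) ^ 2) = c := by
    rw [hε, Real.sq_sqrt (by positivity)]
    field_simp
  have hεn : 0 ≤ ε := by rw [hε]; exact Real.sqrt_nonneg _
  have hK : 0 ≤ 1 + M * n * ε := by positivity
  have ht0 : t0 ^ 2 ≤ (1 + M * n * ε) ^ 2 := by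
    have := pow_le_pow_left₀ (abs_nonneg t0) h0 2; rwa [sq_abs] at this
  have ht1 : t1 ^ 2 ≤ (1 + M * n * ε) ^ 2 := by
    have := pow_le_pow_left₀ (abs_nonneg t1) h1 2; rwa [sq_abs] at this
  have ht2 : t2 ^ 2 ≤ (1 + M * n * ε) ^ 2 := by
    have := pow_le_pow_left₀ (abs_nonneg t2) h2 2; rwa [sq_abs] at this
  have hq2 : -q ≤ 2 := by rcases hq with h | h <;> simp [h]
  have h6 : M ^ 2 * ε ^ 2 * 24 ≤ c := by nlinarith [mul_nonneg (sq_nonneg ε) hM]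
  have h6' : M ^ 2 * ε ^ 2 * n ^ 2 * 24 ≤ c * n ^ 2 := by
    nlinarith [sq_nonneg n, mul_le_mul_of_nonneg_right h6 (sq_nonneg n)]
  have he : (1 + M * n * ε) ^ 2 ≤ 2 + 2 * (M * n * ε) ^ 2 := by
    nlinarith [sq_nonneg (1 - M * n * ε)]
  have hcn2 : c * n ^ 2 ≤ 14 + 12 * (M * n * ε) ^ 2 := by linarith
  have h12 : 12 * (M * n * ε) ^ 2 ≤ c / 2 * n ^ 2 := by nlinarith [h6']
  have hfin : c * n ^ 2 ≤ 14 + c / 2 * n ^ 2 := by linarith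
  rw [le_div_iff₀ hc]
  nlinarith [hfin]

set_option maxHeartbeats 1000000 in
/-- The final contradiction of Step 3: given a signature-(3, n) decomposition, a full lattice
`Λ`, a `B`-orthonormal triple `η_∞` whose span is orthogonal to no `(-2)`-class of `Λ`,
triples `η_j → η_∞`, and nonzero lattice classes `C_j` of square `0` or `-2` whose pairings
with `η_j` tend to `0`, one obtains a contradiction. -/
theorem stmt4 (V : Type*) [NormedAddCommGroup V] [NormedSpace ℝ V] [FiniteDimensional ℝ V]
    (B : V →ₗ[ℝ] V →ₗ[ℝ] ℝ) (hsymm : ∀ x y, B x y = B y x)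
    (Pp Pm : Submodule ℝ V) (hcompl : IsCompl Pp Pm)
    (horth : ∀ x ∈ Pp, ∀ y ∈ Pm, B x y = 0)
    (hdimPp : Module.finrank ℝ Pp = 3)
    (hpos : ∀ x ∈ Pp, x ≠ 0 → 0 < B x x)
    (hneg : ∀ y ∈ Pm, y ≠ 0 → B y y < 0)
    (b : Module.Basis (Fin (Module.finrank ℝ V)) ℝ V)
    (Λ : Set V) (hΛ : Λ = (Submodule.span ℤ (Set.range b) : Set V))
    (η' : Fin 3 → V)
    (horthη : ∀ α β, B (η' α) (η' β) = if α = β then (1 : ℝ) else 0)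
    (hnodelta : ¬ ∃ δ ∈ Λ, B δ δ = -2 ∧
      ∀ x ∈ Submodule.span ℝ (Set.range η'), B δ x = 0)
    (η : ℕ → Fin 3 → V)
    (hconv : ∀ α, Tendsto (fun j => η j α) atTop (nhds (η' α)))
    (C : ℕ → V) (hCmem : ∀ j, C j ∈ Λ) (hCne : ∀ j, C j ≠ 0)
    (hCsq : ∀ j, B (C j) (C j) = 0 ∨ B (C j) (C j) = -2)
    (hCper : ∀ α, Tendsto (fun j => B (C j) (η j α)) atTop (nhds 0)) :
    False := by
  have key : ∀ w, (∀ α, B w (η' α) = 0) → 0 ≤ B w w → w = 0 :=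
    fun w h1 h2 => aux_key V B hsymm Pp Pm hcompl hdimPp hneg η' horthη w h1 h2
  obtain ⟨c, hc, hcoer⟩ := aux_coercive V B hsymm η' horthη key
  -- a bound on the bilinear form
  let B1 : V →ₗ[ℝ] V →L[ℝ] ℝ :=
    { toFun := fun v => LinearMap.toContinuousLinearMap (B v)
      map_add' := by intro x y; ext z; simp
      map_smul' := by intro a x; ext z; simp }
  let B2 : V →L[ℝ] V →L[ℝ] ℝ := LinearMap.toContinuousLinearMap B1
  have hB2 : ∀ x y : V, B2 x y = B x y := fun x y => rfl
  set M := ‖B2‖ with hMdef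
  have hM0 : 0 ≤ M := by rw [hMdef]; exact norm_nonneg B2
  have hM : ∀ x y : V, |B x y| ≤ M * ‖x‖ * ‖y‖ := by
    intro x y
    have := B2.le_opNorm₂ x y
    simpa [hB2] using this
  set ε := Real.sqrt (c / (24 * (M + 1) ^ 2)) with hεdef
  have hεpos : 0 < ε := Real.sqrt_pos.mpr (by positivity)
  -- eventual smallness of the periods and the perturbations
  have hev : ∀ᶠ j in atTop, ∀ α : Fin 3, |B (C j) (η j α)| ≤ 1 ∧ ‖η j α - η' α‖ ≤ ε := by
    rw [eventually_all]
    intro α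
    have h1 : ∀ᶠ j in atTop, |B (C j) (η j α)| ≤ 1 := by
      have habs := (hCper α).abs
      rw [abs_zero] at habs
      exact (habs.eventually_lt_const one_pos).mono fun j h => h.le
    have h2 : ∀ᶠ j in atTop, ‖η j α - η' α‖ ≤ ε := by
      have hconv' : Tendsto (fun j => ‖η j α - η' α‖) atTop (nhds 0) := by
        have hsub := (hconv α).sub_const (η' α)
        simpa using hsub.norm
      exact (hconv'.eventually_lt_const hεpos).mono fun j h => h.le
    exact h1.and h2
  -- eventual bound on the norms of the lattice classes
  set R := Real.sqrt (28 / c) with hRdef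
  have hbound : ∀ᶠ j in atTop, ‖C j‖ ≤ R := by
    filter_upwards [hev] with j hj
    have hest : ∀ α : Fin 3, |B (C j) (η' α)| ≤ 1 + M * ‖C j‖ * ε := by
      intro α
      have hsplit : B (C j) (η' α) = B (C j) (η j α) - B (C j) (η j α - η' α) := by
        rw [map_sub]; ring
      calc |B (C j) (η' α)|
          ≤ |B (C j) (η j α)| + |B (C j) (η j α - η' α)| := by
            rw [hsplit]; exact abs_sub _ _
        _ ≤ 1 + M * ‖C j‖ * ε := by
            have h3 := hM (C j) (η j α - η' α)
            have h4 := (hj α).2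
            have h5 := (hj α).1
            have h6 : M * ‖C j‖ * ‖η j α - η' α‖ ≤ M * ‖C j‖ * ε :=
              mul_le_mul_of_nonneg_left h4 (mul_nonneg hM0 (norm_nonneg _))
            linarith
    have harith : ‖C j‖ ^ 2 ≤ 28 / c :=
      aux_arith c M (‖C j‖) ε _ _ _ _ hc hM0 (norm_nonneg _) hεdef
        (hest 0) (hest 1) (hest 2) (hCsq j) (hcoer (C j))
    have hCR : ‖C j‖ = Real.sqrt (‖C j‖ ^ 2) := (Real.sqrt_sq (norm_nonneg _)).symm
    rw [hCR, hRdef]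
    exact Real.sqrt_le_sqrt harith
  obtain ⟨J, hJ⟩ := eventually_atTop.mp hbound
  -- finiteness of the bounded part of the lattice
  set L := Submodule.span ℤ (Set.range b) with hL
  haveI hdisc : DiscreteTopology ((L : Set V) : Type _) :=
    inferInstanceAs (DiscreteTopology L)
  have hclosed : IsClosed (L : Set V) := by
    have hcl : IsClosed ((L.toAddSubgroup : Set V)) := AddSubgroup.isClosed_of_discrete
    simpa using hcl
  have hfin : ((Metric.closedBall (0:V) R) ∩ (L : Set V)).Finite :=
    Metric.finite_isBounded_inter_isClosed DiscreteTopology.isDiscrete Metric.isBounded_closedBall hclosed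
  set T := (Metric.closedBall (0:V) R) ∩ (L : Set V) with hT
  have hmemT : ∀ j : ℕ, C (j + J) ∈ T := by
    intro j
    constructor
    · rw [Metric.mem_closedBall, dist_zero_right]
      exact hJ (j + J) (Nat.le_add_left J j)
    · have hm := hCmem (j + J); rwa [hΛ] at hm
  haveI : Finite T := hfin.to_subtype
  obtain ⟨y, hy⟩ := Finite.exists_infinite_fiber (fun j : ℕ => (⟨C (j + J), hmemT j⟩ : T))
  set v : V := (y : V) with hv
  have hSinf : {j : ℕ | C j = v}.Infinite := by
    have himg : ((fun j => j + J) ''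
        ((fun j : ℕ => (⟨C (j + J), hmemT j⟩ : T)) ⁻¹' {y})).Infinite :=
      (Set.infinite_coe_iff.mp hy).image ((add_left_injective J).injOn)
    apply himg.mono
    rintro _ ⟨j, hj, rfl⟩
    have heq : (⟨C (j + J), hmemT j⟩ : T) = y := hj
    simpa [hv] using congrArg Subtype.val heq
  have hfreq : ∃ᶠ j in atTop, C j = v := Nat.frequently_atTop_iff_infinite.mpr hSinf
  haveI hneBot : (atTop ⊓ 𝓟 {j : ℕ | C j = v}).NeBot := frequently_iff_neBot.mp hfreq
  set l' := atTop ⊓ 𝓟 {j : ℕ | C j = v} with hl'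
  have hlim : ∀ α, B v (η' α) = 0 := by
    intro α
    have h1 : Tendsto (fun j => B (C j) (η j α)) l' (nhds 0) := (hCper α).mono_left inf_le_left
    have hBv : Continuous fun x : V => B v x := (B v).continuous_of_finiteDimensional
    have h2 : Tendsto (fun j => B v (η j α)) l' (nhds (B v (η' α))) :=
      (hBv.tendsto (η' α)).comp ((hconv α).mono_left inf_le_left)
    have heq : ∀ᶠ j in l', B (C j) (η j α) = B v (η j α) := by
      have hev2 : ∀ᶠ j in l', C j = v := by
        rw [hl', eventually_inf_principal]
        exact Eventually.of_forall fun j hj => hj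
      exact hev2.mono fun j hj => by rw [hj]
    exact (tendsto_nhds_unique (h1.congr' heq) h2).symm
  obtain ⟨j₀, hj₀⟩ := hSinf.nonempty
  have hvΛ : v ∈ Λ := by rw [← hj₀]; exact hCmem j₀
  have hvne : v ≠ 0 := by rw [← hj₀]; exact hCne j₀
  have hvsq : B v v = 0 ∨ B v v = -2 := by rw [← hj₀]; exact hCsq j₀
  have hspan : ∀ x ∈ Submodule.span ℝ (Set.range η'), B v x = 0 := by
    intro x hx
    induction hx using Submodule.span_induction with
    | mem x hx => obtain ⟨α, rfl⟩ := hx; exact hlim α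
    | zero => simp
    | add x y _ _ hx hy => rw [map_add, hx, hy, add_zero]
    | smul a x _ hx => rw [map_smul, hx, smul_zero]
  rcases hvsq with h | h
  · exact hvne (key v hlim (le_of_eq h.symm))
  · exact hnodelta ⟨v, hvΛ, h, hspan⟩
end
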